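/- Let (κ,ρ) ∈ (0,1] × (0,∞). (1) If κ < 1, or if κ = 1 and ρ ≤ 1, then each of the maps β ↦ φ₀(κ,ρ,β) and β ↦ φ₁(κ,ρ,β) tends to 0 as β → 0 and to ∞ as β → ∞. (2) If ρ²κ ≤ 1, then β ↦ φ₀(κ,ρ,β) and β ↦ φ₁(κ,ρ,β) are increasing bijections of (0,∞). (3) If κρ < 1 + √(1−κ²), then φ₀(κ,ρ,β) > φ₁(κ,ρ,β) for every β ∈ (0,∞); the same conclusion φ₀(κ,ρ,β) > φ₁(κ,ρ,β) also holds whenever ρ²κ ≤ 1. -/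

import Mathlib

open Real Filter Set

noncomputable section

/-- `φ₀(κ,ρ,β)`. -/
def phi0 (κ ρ β : ℝ) : ℝ :=
  β * ((1 - κ) * β ^ (2 * ρ) + 2 * (1 + κ * ρ) * β ^ ρ + 1 + κ)
    / ((1 - κ) * β ^ (2 * ρ) + 2 * (1 - κ * ρ) * β ^ ρ + 1 + κ)

/-- `φ₁(κ,ρ,β)`. -/
def phi1 (κ ρ β : ℝ) : ℝ :=
  β * ((1 + κ) * β ^ (2 * ρ) + 2 * (1 - κ * ρ) * β ^ ρ + 1 - κ)
    / ((1 + κ) * β ^ (2 * ρ) + 2 * (1 + κ * ρ) * β ^ ρ + 1 - κ)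

/-! ### Auxiliary lemmas -/

lemma rpow_two_mul {β : ℝ} (hβ : 0 < β) (ρ : ℝ) : β ^ (2 * ρ) = (β ^ ρ) ^ 2 := by
  rw [mul_comm, Real.rpow_mul hβ.le, ← Real.rpow_natCast (β ^ ρ) 2]; norm_num

lemma hasDerivAt_aux (a b c d ρ : ℝ) {β : ℝ} (hβ : 0 < β)
    (hD : a * (β ^ ρ) ^ 2 + d * β ^ ρ + c ≠ 0) :
    HasDerivAt (fun β : ℝ => β * (a * β ^ (2*ρ) + b * β ^ ρ + c) / (a * β ^ (2*ρ) + d * β ^ ρ + c))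
      (((a * (β^ρ)^2 + b * β^ρ + c) * (a * (β^ρ)^2 + d * β^ρ + c)
        + ρ * (b - d) * β^ρ * (c - a * (β^ρ)^2)) / (a * (β^ρ)^2 + d * β^ρ + c)^2) β := by
  have h2 : β ^ (2*ρ) = (β ^ ρ)^2 := rpow_two_mul hβ ρ
  have hr : HasDerivAt (fun β : ℝ => β ^ ρ) (ρ * β ^ (ρ-1)) β :=
    Real.hasDerivAt_rpow_const (Or.inl hβ.ne')
  have hr2 : HasDerivAt (fun β : ℝ => β ^ (2*ρ)) ((2*ρ) * β ^ (2*ρ-1)) β :=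
    Real.hasDerivAt_rpow_const (Or.inl hβ.ne')
  have hN : HasDerivAt (fun β : ℝ => a * β ^ (2*ρ) + b * β ^ ρ + c)
      (a * ((2*ρ) * β ^ (2*ρ-1)) + b * (ρ * β ^ (ρ-1)) + 0) β :=
    ((hr2.const_mul a).add (hr.const_mul b)).add (hasDerivAt_const _ _)
  have hDD : HasDerivAt (fun β : ℝ => a * β ^ (2*ρ) + d * β ^ ρ + c)
      (a * ((2*ρ) * β ^ (2*ρ-1)) + d * (ρ * β ^ (ρ-1)) + 0) β :=
    ((hr2.const_mul a).add (hr.const_mul d)).add (hasDerivAt_const _ _)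
  have hnum : HasDerivAt (fun β : ℝ => β * (a * β ^ (2*ρ) + b * β ^ ρ + c))
      (1 * (a * β ^ (2*ρ) + b * β ^ ρ + c)
        + β * (a * ((2*ρ) * β ^ (2*ρ-1)) + b * (ρ * β ^ (ρ-1)) + 0)) β :=
    (hasDerivAt_id β).mul hN
  have hD' : (a * β ^ (2*ρ) + d * β ^ ρ + c) ≠ 0 := by rw [h2]; exact hD
  have h := hnum.div hDD hD'
  refine h.congr_deriv ?_
  have hρ1 : β ^ (ρ-1) = β ^ ρ / β := by rw [Real.rpow_sub hβ, Real.rpow_one]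
  have hρ2 : β ^ (2*ρ-1) = (β ^ ρ)^2 / β := by rw [Real.rpow_sub hβ, Real.rpow_one, h2]
  rw [hρ1, hρ2, h2]
  field_simp
  ring

lemma phi0_eq (κ ρ : ℝ) : phi0 κ ρ =
    fun β : ℝ => β * ((1-κ) * β ^ (2*ρ) + 2*(1+κ*ρ) * β ^ ρ + (1+κ))
      / ((1-κ) * β ^ (2*ρ) + 2*(1-κ*ρ) * β ^ ρ + (1+κ)) := by
  funext β; simp only [phi0]; congr 1 <;> ring

lemma phi0_apply (κ ρ β : ℝ) : phi0 κ ρ β =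
    β * ((1-κ) * β ^ (2*ρ) + 2*(1+κ*ρ) * β ^ ρ + (1+κ))
      / ((1-κ) * β ^ (2*ρ) + 2*(1-κ*ρ) * β ^ ρ + (1+κ)) := by
  simp only [phi0]; congr 1 <;> ring

lemma phi1_apply (κ ρ β : ℝ) : phi1 κ ρ β =
    β * ((1+κ) * β ^ (2*ρ) + 2*(1-κ*ρ) * β ^ ρ + (1-κ))
      / ((1+κ) * β ^ (2*ρ) + 2*(1+κ*ρ) * β ^ ρ + (1-κ)) := by
  simp only [phi1]; congr 1 <;> ring

lemma phi1_eq (κ ρ : ℝ) : phi1 κ ρ =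
    fun β : ℝ => β * ((1+κ) * β ^ (2*ρ) + 2*(1-κ*ρ) * β ^ ρ + (1-κ))
      / ((1+κ) * β ^ (2*ρ) + 2*(1+κ*ρ) * β ^ ρ + (1-κ)) := by
  funext β; simp only [phi1]; congr 1 <;> ring

section params

variable {κ ρ : ℝ} (hκ0 : 0 < κ) (hκ1 : κ ≤ 1) (hρ : 0 < ρ)

include hκ0 hκ1 hρ

lemma kr_le_one (h : ρ ^ 2 * κ ≤ 1) : κ * ρ ≤ 1 := by
  rcases le_or_gt ρ 1 with h1 | h1
  · nlinarith
  · nlinarith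

lemma D1_pos {t : ℝ} (ht : 0 < t) : 0 < (1+κ) * t^2 + 2*(1+κ*ρ) * t + (1-κ) := by
  nlinarith [sq_nonneg t, mul_pos hκ0 hρ, mul_pos hκ0 ht]

lemma D0_pos (h1 : κ * ρ ≤ 1) {t : ℝ} (ht : 0 < t) :
    0 < (1-κ) * t^2 + 2*(1-κ*ρ) * t + (1+κ) := by
  nlinarith [sq_nonneg t, mul_nonneg (sub_nonneg.2 h1) ht.le]

lemma N0_pos {t : ℝ} (ht : 0 < t) : 0 < (1-κ) * t^2 + 2*(1+κ*ρ) * t + (1+κ) := by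
  nlinarith [sq_nonneg t, mul_pos hκ0 hρ, mul_pos hκ0 ht]

lemma N1_pos (h1 : κ * ρ ≤ 1) {t : ℝ} (ht : 0 < t) :
    0 < (1+κ) * t^2 + 2*(1-κ*ρ) * t + (1-κ) := by
  nlinarith [mul_pos ht ht, mul_nonneg (sub_nonneg.2 h1) ht.le]

lemma P0_pos (h1 : κ*ρ ≤ 1) (h2 : κ*ρ^2 ≤ 1) {t : ℝ} (ht : 0 < t) :
    0 < ((1-κ)*t^2 + 2*(1+κ*ρ)*t + (1+κ))*((1-κ)*t^2 + 2*(1-κ*ρ)*t + (1+κ))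
      + ρ * (2*(1+κ*ρ) - 2*(1-κ*ρ)) * t * ((1+κ) - (1-κ)*t^2) := by
  have key : ((1-κ)*t^2 + 2*(1+κ*ρ)*t + (1+κ))*((1-κ)*t^2 + 2*(1-κ*ρ)*t + (1+κ))
      + ρ * (2*(1+κ*ρ) - 2*(1-κ*ρ)) * t * ((1+κ) - (1-κ)*t^2)
      = ((1-κ)*t^2 + 2*t + (1+κ))^2 - 4*κ*ρ^2*t*((1-κ)*t^2 + κ*t - (1+κ)) := by ring
  rw [key]
  rcases le_or_gt ((1-κ)*t^2 + κ*t - (1+κ)) 0 with hq | hq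
  · nlinarith [sq_nonneg ((1-κ)*t^2 + (1+κ)), mul_pos ht ht,
      mul_nonneg (show (0:ℝ) ≤ (1-κ)*t^2+(1+κ) by nlinarith [sq_nonneg t]) ht.le,
      mul_nonneg (mul_nonneg (mul_nonneg hκ0.le (sq_nonneg ρ)) ht.le) (neg_nonneg.2 hq)]
  · nlinarith [sq_nonneg ((1-κ)*t^2 + (1+κ)), mul_pos ht hq,
      mul_pos ht (show (0:ℝ) < 1+κ by linarith)]

lemma P1_pos (h1 : κ*ρ ≤ 1) (h2 : κ*ρ^2 ≤ 1) {t : ℝ} (ht : 0 < t) :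
    0 < ((1+κ)*t^2 + 2*(1-κ*ρ)*t + (1-κ))*((1+κ)*t^2 + 2*(1+κ*ρ)*t + (1-κ))
      + ρ * (2*(1-κ*ρ) - 2*(1+κ*ρ)) * t * ((1-κ) - (1+κ)*t^2) := by
  have key : ((1+κ)*t^2 + 2*(1-κ*ρ)*t + (1-κ))*((1+κ)*t^2 + 2*(1+κ*ρ)*t + (1-κ))
      + ρ * (2*(1-κ*ρ) - 2*(1+κ*ρ)) * t * ((1-κ) - (1+κ)*t^2)
      = ((1+κ)*t^2 + 2*t + (1-κ))^2 - 4*κ*ρ^2*t*((1-κ) + κ*t - (1+κ)*t^2) := by ring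
  rw [key]
  rcases le_or_gt ((1-κ) + κ*t - (1+κ)*t^2) 0 with hq | hq
  · nlinarith [sq_nonneg ((1+κ)*t^2 + (1-κ)), mul_pos ht ht,
      mul_nonneg (mul_nonneg (mul_nonneg hκ0.le (sq_nonneg ρ)) ht.le) (neg_nonneg.2 hq)]
  · nlinarith [sq_nonneg ((1+κ)*t^2 + (1-κ)), mul_pos ht hq,
      mul_pos (mul_pos ht ht) ht]

lemma phi0_hasDerivAt (h1 : κ * ρ ≤ 1) {β : ℝ} (hβ : 0 < β) :
    HasDerivAt (phi0 κ ρ)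
      ((((1-κ) * (β^ρ)^2 + 2*(1+κ*ρ) * β^ρ + (1+κ)) * ((1-κ) * (β^ρ)^2 + 2*(1-κ*ρ) * β^ρ + (1+κ))
        + ρ * (2*(1+κ*ρ) - 2*(1-κ*ρ)) * β^ρ * ((1+κ) - (1-κ) * (β^ρ)^2))
        / ((1-κ) * (β^ρ)^2 + 2*(1-κ*ρ) * β^ρ + (1+κ))^2) β := by
  rw [phi0_eq]
  exact hasDerivAt_aux (1-κ) (2*(1+κ*ρ)) (1+κ) (2*(1-κ*ρ)) ρ hβ
    (ne_of_gt (D0_pos hκ0 hκ1 hρ h1 (Real.rpow_pos_of_pos hβ ρ)))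

lemma phi1_hasDerivAt (h1 : κ * ρ ≤ 1) {β : ℝ} (hβ : 0 < β) :
    HasDerivAt (phi1 κ ρ)
      ((((1+κ) * (β^ρ)^2 + 2*(1-κ*ρ) * β^ρ + (1-κ)) * ((1+κ) * (β^ρ)^2 + 2*(1+κ*ρ) * β^ρ + (1-κ))
        + ρ * (2*(1-κ*ρ) - 2*(1+κ*ρ)) * β^ρ * ((1-κ) - (1+κ) * (β^ρ)^2))
        / ((1+κ) * (β^ρ)^2 + 2*(1+κ*ρ) * β^ρ + (1-κ))^2) β := by
  rw [phi1_eq]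
  exact hasDerivAt_aux (1+κ) (2*(1-κ*ρ)) (1-κ) (2*(1+κ*ρ)) ρ hβ
    (ne_of_gt (D1_pos hκ0 hκ1 hρ (Real.rpow_pos_of_pos hβ ρ)))

lemma mono_phi0 (h : ρ ^ 2 * κ ≤ 1) : StrictMonoOn (phi0 κ ρ) (Set.Ioi 0) := by
  have h1 : κ * ρ ≤ 1 := kr_le_one hκ0 hκ1 hρ h
  have h2 : κ * ρ ^ 2 ≤ 1 := by linarith [h, (by ring : ρ^2*κ = κ*ρ^2)]
  apply strictMonoOn_of_deriv_pos (convex_Ioi 0)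
  · intro x hx
    exact (phi0_hasDerivAt hκ0 hκ1 hρ h1 hx).continuousAt.continuousWithinAt
  · rw [interior_Ioi]
    intro x hx
    rw [(phi0_hasDerivAt hκ0 hκ1 hρ h1 hx).deriv]
    have ht : 0 < x ^ ρ := Real.rpow_pos_of_pos hx ρ
    exact div_pos (P0_pos hκ0 hκ1 hρ h1 h2 ht) (pow_pos (D0_pos hκ0 hκ1 hρ h1 ht) 2)

lemma mono_phi1 (h : ρ ^ 2 * κ ≤ 1) : StrictMonoOn (phi1 κ ρ) (Set.Ioi 0) := by
  have h1 : κ * ρ ≤ 1 := kr_le_one hκ0 hκ1 hρ h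
  have h2 : κ * ρ ^ 2 ≤ 1 := by linarith [h, (by ring : ρ^2*κ = κ*ρ^2)]
  apply strictMonoOn_of_deriv_pos (convex_Ioi 0)
  · intro x hx
    exact (phi1_hasDerivAt hκ0 hκ1 hρ h1 hx).continuousAt.continuousWithinAt
  · rw [interior_Ioi]
    intro x hx
    rw [(phi1_hasDerivAt hκ0 hκ1 hρ h1 hx).deriv]
    have ht : 0 < x ^ ρ := Real.rpow_pos_of_pos hx ρ
    exact div_pos (P1_pos hκ0 hκ1 hρ h1 h2 ht) (pow_pos (D1_pos hκ0 hκ1 hρ ht) 2)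

/-! ### Limits -/

lemma lim0_phi0 : Tendsto (phi0 κ ρ) (nhdsWithin 0 (Set.Ioi 0)) (nhds 0) := by
  have h1 : ContinuousAt (fun β : ℝ => β ^ ρ) 0 :=
    Real.continuousAt_rpow_const 0 ρ (Or.inr hρ.le)
  have h2 : ContinuousAt (fun β : ℝ => β ^ (2*ρ)) 0 :=
    Real.continuousAt_rpow_const 0 (2*ρ) (Or.inr (by linarith))
  have hN : ContinuousAt (fun β : ℝ => (1-κ) * β ^ (2*ρ) + 2*(1+κ*ρ) * β ^ ρ + 1 + κ) 0 :=
    (((continuousAt_const.mul h2).add (continuousAt_const.mul h1)).add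
      continuousAt_const).add continuousAt_const
  have hD : ContinuousAt (fun β : ℝ => (1-κ) * β ^ (2*ρ) + 2*(1-κ*ρ) * β ^ ρ + 1 + κ) 0 :=
    (((continuousAt_const.mul h2).add (continuousAt_const.mul h1)).add
      continuousAt_const).add continuousAt_const
  have hDne : (1-κ) * (0:ℝ) ^ (2*ρ) + 2*(1-κ*ρ) * (0:ℝ) ^ ρ + 1 + κ ≠ 0 := by
    rw [Real.zero_rpow (ne_of_gt (by linarith : (0:ℝ) < 2*ρ)), Real.zero_rpow hρ.ne']
    simp; linarith
  have hc : ContinuousAt (phi0 κ ρ) 0 := (continuousAt_id.mul hN).div hD hDne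
  have hval : phi0 κ ρ 0 = 0 := by simp [phi0]
  have := hc.tendsto
  rw [hval] at this
  exact this.mono_left nhdsWithin_le_nhds

lemma tendsto_rpow_zero : Tendsto (fun β : ℝ => β ^ ρ) (nhdsWithin 0 (Set.Ioi 0)) (nhds 0) := by
  have h1 : ContinuousAt (fun β : ℝ => β ^ ρ) 0 :=
    Real.continuousAt_rpow_const 0 ρ (Or.inr hρ.le)
  have := h1.tendsto
  rw [Real.zero_rpow hρ.ne'] at this
  exact this.mono_left nhdsWithin_le_nhds

lemma lim0_phi1 (hyp : κ < 1 ∨ (κ = 1 ∧ ρ ≤ 1)) :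
    Tendsto (phi1 κ ρ) (nhdsWithin 0 (Set.Ioi 0)) (nhds 0) := by
  have htend := tendsto_rpow_zero hκ0 hκ1 hρ
  have hNpos : ∀ᶠ β in nhdsWithin 0 (Set.Ioi 0),
      0 ≤ (1+κ) * (β^ρ)^2 + 2*(1-κ*ρ) * β^ρ + (1-κ) := by
    rcases hyp with hlt | ⟨hk1, hr1⟩
    · have hδ : (0:ℝ) < (1-κ) / (2*(1+κ*ρ)) :=
        div_pos (by linarith) (by nlinarith [mul_pos hκ0 hρ])
      filter_upwards [htend.eventually_lt_const hδ, self_mem_nhdsWithin] with β hlt' hβ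
      have ht : 0 < β ^ ρ := Real.rpow_pos_of_pos hβ ρ
      have hmul : β^ρ * (2*(1+κ*ρ)) < 1-κ :=
        (lt_div_iff₀ (by nlinarith [mul_pos hκ0 hρ] : (0:ℝ) < 2*(1+κ*ρ))).mp hlt'
      nlinarith [sq_nonneg (β^ρ), mul_pos ht ht]
    · filter_upwards [self_mem_nhdsWithin] with β hβ
      have ht : 0 < β ^ ρ := Real.rpow_pos_of_pos hβ ρ
      subst hk1
      nlinarith [mul_pos ht ht, mul_nonneg (sub_nonneg.2 hr1) ht.le]
  apply tendsto_of_tendsto_of_tendsto_of_le_of_le' tendsto_const_nhds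
    (tendsto_id.mono_left nhdsWithin_le_nhds)
  · filter_upwards [hNpos, self_mem_nhdsWithin] with β hN hβ
    have hβ' : (0:ℝ) < β := hβ
    have ht : 0 < β ^ ρ := Real.rpow_pos_of_pos hβ' ρ
    have h2 : β ^ (2*ρ) = (β^ρ)^2 := rpow_two_mul hβ' ρ
    have hD : 0 < (1+κ) * (β^ρ)^2 + 2*(1+κ*ρ) * β^ρ + (1-κ) := D1_pos hκ0 hκ1 hρ ht
    show (0:ℝ) ≤ phi1 κ ρ β
    rw [phi1_apply, h2]
    exact div_nonneg (mul_nonneg hβ'.le hN) hD.le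
  · filter_upwards [hNpos, self_mem_nhdsWithin] with β hN hβ
    have hβ' : (0:ℝ) < β := hβ
    have ht : 0 < β ^ ρ := Real.rpow_pos_of_pos hβ' ρ
    have h2 : β ^ (2*ρ) = (β^ρ)^2 := rpow_two_mul hβ' ρ
    have hD : 0 < (1+κ) * (β^ρ)^2 + 2*(1+κ*ρ) * β^ρ + (1-κ) := D1_pos hκ0 hκ1 hρ ht
    show phi1 κ ρ β ≤ id β
    rw [phi1_apply, h2]
    rw [div_le_iff₀ hD]
    simp only [id]
    nlinarith [mul_nonneg (mul_nonneg (mul_nonneg hβ'.le hκ0.le) hρ.le) ht.le]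

lemma limTop_phi0 (hyp : κ < 1 ∨ (κ = 1 ∧ ρ ≤ 1)) :
    Tendsto (phi0 κ ρ) atTop atTop := by
  have ht : Tendsto (fun β : ℝ => β ^ ρ) atTop atTop := tendsto_rpow_atTop hρ
  have hDpos : ∀ᶠ β in atTop, 0 < (1-κ) * (β^ρ)^2 + 2*(1-κ*ρ) * β^ρ + (1+κ) := by
    rcases hyp with hlt | ⟨hk1, hr1⟩
    · have hq : Tendsto (fun t : ℝ => (1-κ) * t^2 + 2*(1-κ*ρ) * t + (1+κ)) atTop atTop := by
        have hinner : Tendsto (fun t : ℝ => (1-κ) * t + 2*(1-κ*ρ)) atTop atTop :=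
          tendsto_atTop_add_const_right _ _ (tendsto_id.const_mul_atTop (by linarith))
        have hmul : Tendsto (fun t : ℝ => t * ((1-κ) * t + 2*(1-κ*ρ))) atTop atTop :=
          tendsto_id.atTop_mul_atTop₀ hinner
        have := tendsto_atTop_add_const_right _ (1+κ) hmul
        exact this.congr (fun t => by ring)
      exact (hq.comp ht).eventually_gt_atTop 0
    · filter_upwards [ht.eventually_ge_atTop 0] with β htβ
      subst hk1
      nlinarith [sq_nonneg (β^ρ), mul_nonneg (sub_nonneg.2 hr1) htβ]
  refine tendsto_atTop_mono' atTop ?_ tendsto_id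
  filter_upwards [eventually_ge_atTop 1, hDpos] with β hβ1 hD
  have hβ : (0:ℝ) < β := lt_of_lt_of_le one_pos hβ1
  have ht0 : 0 < β ^ ρ := Real.rpow_pos_of_pos hβ ρ
  have h2 : β ^ (2*ρ) = (β^ρ)^2 := rpow_two_mul hβ ρ
  show id β ≤ phi0 κ ρ β
  rw [phi0_apply, h2]
  simp only [id]
  rw [le_div_iff₀ hD]
  nlinarith [mul_nonneg (mul_nonneg (mul_nonneg hβ.le hκ0.le) hρ.le) ht0.le]

lemma limTop_phi1 : Tendsto (phi1 κ ρ) atTop atTop := by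
  have ht : Tendsto (fun β : ℝ => β ^ ρ) atTop atTop := tendsto_rpow_atTop hρ
  have h20 : (0:ℝ) < 2 := two_pos
  refine tendsto_atTop_mono' atTop ?_ (Tendsto.atTop_div_const h20 tendsto_id)
  filter_upwards [eventually_ge_atTop 1, ht.eventually_ge_atTop (6*κ*ρ)] with β hβ1 htβ
  have hβ : (0:ℝ) < β := lt_of_lt_of_le one_pos hβ1
  have ht0 : 0 < β ^ ρ := Real.rpow_pos_of_pos hβ ρ
  have h2 : β ^ (2*ρ) = (β^ρ)^2 := rpow_two_mul hβ ρ
  have hD : 0 < (1+κ) * (β^ρ)^2 + 2*(1+κ*ρ) * β^ρ + (1-κ) := D1_pos hκ0 hκ1 hρ ht0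
  show id β / 2 ≤ phi1 κ ρ β
  rw [phi1_apply, h2]
  simp only [id]
  rw [div_le_div_iff₀ h20 hD]
  nlinarith [mul_nonneg (mul_nonneg hβ.le ht0.le) (sub_nonneg.2 htβ),
    mul_nonneg (mul_nonneg (mul_nonneg hβ.le hκ0.le) ht0.le) ht0.le,
    mul_nonneg hβ.le (mul_nonneg ht0.le ht0.le),
    mul_nonneg hβ.le ht0.le, mul_nonneg hβ.le (sub_nonneg.2 hκ1)]

/-! ### Surjectivity -/

omit hκ0 hκ1 hρ in
lemma surjOn_aux {f : ℝ → ℝ} (hc : ContinuousOn f (Set.Ioi 0))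
    (h0 : Tendsto f (nhdsWithin 0 (Set.Ioi 0)) (nhds 0)) (hT : Tendsto f atTop atTop) :
    Set.SurjOn f (Set.Ioi 0) (Set.Ioi 0) := by
  intro y hy
  have hy0 : (0:ℝ) < y := hy
  obtain ⟨a, haf, ha⟩ : ∃ a, f a < y ∧ a ∈ Set.Ioi (0:ℝ) :=
    ((h0.eventually_lt_const hy0).and self_mem_nhdsWithin).exists
  obtain ⟨b, hbf, hba⟩ : ∃ b, y < f b ∧ a ≤ b :=
    ((hT.eventually_gt_atTop y).and (eventually_ge_atTop a)).exists
  have hsub : Set.Icc a b ⊆ Set.Ioi 0 := fun x hx => lt_of_lt_of_le ha hx.1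
  have hy' : y ∈ Set.Icc (f a) (f b) := ⟨haf.le, hbf.le⟩
  obtain ⟨x, hx, hfx⟩ := intermediate_value_Icc hba (hc.mono hsub) hy'
  exact ⟨x, hsub hx, hfx⟩

lemma mapsTo_phi0 (h1 : κ * ρ ≤ 1) : Set.MapsTo (phi0 κ ρ) (Set.Ioi 0) (Set.Ioi 0) := by
  intro β hβ
  have hβ' : (0:ℝ) < β := hβ
  have ht : 0 < β ^ ρ := Real.rpow_pos_of_pos hβ' ρ
  have h2 : β ^ (2*ρ) = (β^ρ)^2 := rpow_two_mul hβ' ρ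
  show (0:ℝ) < phi0 κ ρ β
  rw [phi0_apply, h2]
  exact div_pos (mul_pos hβ' (N0_pos hκ0 hκ1 hρ ht)) (D0_pos hκ0 hκ1 hρ h1 ht)

lemma mapsTo_phi1 (h1 : κ * ρ ≤ 1) : Set.MapsTo (phi1 κ ρ) (Set.Ioi 0) (Set.Ioi 0) := by
  intro β hβ
  have hβ' : (0:ℝ) < β := hβ
  have ht : 0 < β ^ ρ := Real.rpow_pos_of_pos hβ' ρ
  have h2 : β ^ (2*ρ) = (β^ρ)^2 := rpow_two_mul hβ' ρ
  show (0:ℝ) < phi1 κ ρ β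
  rw [phi1_apply, h2]
  exact div_pos (mul_pos hβ' (N1_pos hκ0 hκ1 hρ h1 ht)) (D1_pos hκ0 hκ1 hρ ht)

/-! ### Part 3 -/

lemma part3 (hyp : κ * ρ < 1 + Real.sqrt (1 - κ ^ 2) ∨ ρ ^ 2 * κ ≤ 1)
    {β : ℝ} (hβ : 0 < β) : phi1 κ ρ β < phi0 κ ρ β := by
  have ht : 0 < β ^ ρ := Real.rpow_pos_of_pos hβ ρ
  have h2 : β ^ (2*ρ) = (β^ρ)^2 := rpow_two_mul hβ ρ
  set t := β ^ ρ with htdef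
  have hD1 : 0 < (1+κ) * t^2 + 2*(1+κ*ρ) * t + (1-κ) := D1_pos hκ0 hκ1 hρ ht
  have hD0 : 0 < (1-κ) * t^2 + 2*(1-κ*ρ) * t + (1+κ) := by
    rcases le_or_gt (κ*ρ) 1 with h1 | h1
    · exact D0_pos hκ0 hκ1 hρ h1 ht
    · have hyp' : κ * ρ < 1 + Real.sqrt (1 - κ ^ 2) := by
        rcases hyp with h | h
        · exact h
        · exact absurd (kr_le_one hκ0 hκ1 hρ h) h1.not_ge
      have hs0 : (0:ℝ) ≤ 1 - κ^2 := by nlinarith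
      have hs : Real.sqrt (1-κ^2) ^ 2 = 1 - κ^2 := Real.sq_sqrt hs0
      have hsq : (κ*ρ - 1)^2 < 1 - κ^2 := by
        have h1' : 0 < κ*ρ - 1 := by linarith
        have h2' : κ*ρ - 1 < Real.sqrt (1-κ^2) := by linarith
        nlinarith [Real.sqrt_nonneg (1-κ^2)]
      have hκlt : κ < 1 := by nlinarith
      nlinarith [sq_nonneg ((1-κ)*t - (κ*ρ-1)), mul_pos ht ht]
  rw [phi0_apply, phi1_apply, h2]
  rw [div_lt_div_iff₀ hD1 hD0]
  have key : ((1-κ)*t^2 + 2*(1+κ*ρ)*t + (1+κ)) * ((1+κ)*t^2 + 2*(1+κ*ρ)*t + (1-κ))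
      - ((1+κ)*t^2 + 2*(1-κ*ρ)*t + (1-κ)) * ((1-κ)*t^2 + 2*(1-κ*ρ)*t + (1+κ))
      = 8*κ*ρ*t*(t+1)^2 := by ring
  nlinarith [mul_pos (mul_pos (mul_pos (mul_pos hκ0 hρ) ht) hβ) (pow_pos (by linarith : (0:ℝ) < t+1) 2), key, mul_pos hβ hD1, mul_pos hβ hD0]

end params

theorem stmt13 (κ ρ : ℝ) (hκ : κ ∈ Set.Ioc (0:ℝ) 1) (hρ : 0 < ρ) :
    ((κ < 1 ∨ (κ = 1 ∧ ρ ≤ 1)) →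
      (Tendsto (fun β => phi0 κ ρ β) (nhdsWithin 0 (Set.Ioi 0)) (nhds 0) ∧
       Tendsto (fun β => phi0 κ ρ β) atTop atTop ∧
       Tendsto (fun β => phi1 κ ρ β) (nhdsWithin 0 (Set.Ioi 0)) (nhds 0) ∧
       Tendsto (fun β => phi1 κ ρ β) atTop atTop)) ∧
    (ρ ^ 2 * κ ≤ 1 →
      (StrictMonoOn (phi0 κ ρ) (Set.Ioi 0) ∧ Set.BijOn (phi0 κ ρ) (Set.Ioi 0) (Set.Ioi 0) ∧
       StrictMonoOn (phi1 κ ρ) (Set.Ioi 0) ∧ Set.BijOn (phi1 κ ρ) (Set.Ioi 0) (Set.Ioi 0))) ∧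
    ((κ * ρ < 1 + Real.sqrt (1 - κ ^ 2) ∨ ρ ^ 2 * κ ≤ 1) →
      ∀ β : ℝ, 0 < β → phi1 κ ρ β < phi0 κ ρ β) := by
  obtain ⟨hκ0, hκ1⟩ := hκ
  refine ⟨?_, ?_, ?_⟩
  · intro hyp
    exact ⟨lim0_phi0 hκ0 hκ1 hρ, limTop_phi0 hκ0 hκ1 hρ hyp,
      lim0_phi1 hκ0 hκ1 hρ hyp, limTop_phi1 hκ0 hκ1 hρ⟩
  · intro h
    have h1 : κ * ρ ≤ 1 := kr_le_one hκ0 hκ1 hρ h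
    have hyp : κ < 1 ∨ (κ = 1 ∧ ρ ≤ 1) := by
      rcases lt_or_eq_of_le hκ1 with h' | h'
      · exact Or.inl h'
      · exact Or.inr ⟨h', by rw [h'] at h1; linarith⟩
    have m0 := mono_phi0 hκ0 hκ1 hρ h
    have m1 := mono_phi1 hκ0 hκ1 hρ h
    have c0 : ContinuousOn (phi0 κ ρ) (Set.Ioi 0) := fun x hx =>
      (phi0_hasDerivAt hκ0 hκ1 hρ h1 hx).continuousAt.continuousWithinAt
    have c1 : ContinuousOn (phi1 κ ρ) (Set.Ioi 0) := fun x hx =>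
      (phi1_hasDerivAt hκ0 hκ1 hρ h1 hx).continuousAt.continuousWithinAt
    exact ⟨m0,
      ⟨mapsTo_phi0 hκ0 hκ1 hρ h1, m0.injOn,
        surjOn_aux c0 (lim0_phi0 hκ0 hκ1 hρ) (limTop_phi0 hκ0 hκ1 hρ hyp)⟩,
      m1,
      ⟨mapsTo_phi1 hκ0 hκ1 hρ h1, m1.injOn,
        surjOn_aux c1 (lim0_phi1 hκ0 hκ1 hρ hyp) (limTop_phi1 hκ0 hκ1 hρ)⟩⟩
  · intro hyp β hβ
    exact part3 hκ0 hκ1 hρ hyp hβ
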